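/- For every q > 1 with 1/p + 1/q = 1 (p > 1), the sum ∑_{k=1}^∞ 1/k^q is finite and satisfies (∑_{k=1}^∞ 1/k^q)^{1/q} ≤ C · p for some absolute constant C > 0 independent of p. -/

import Mathlib

open Real

/-- For every p > 1 with conjugate q = p/(p-1), ∑ 1/k^q is finite and
(∑ 1/k^q)^{1/q} ≤ C·p for an absolute constant C. -/
theorem stmt0 : ∃ C : ℝ, 0 < C ∧ ∀ p : ℝ, 1 < p →
    Summable (fun k : ℕ => 1 / ((k : ℝ) + 1) ^ (p / (p - 1))) ∧
    (∑' k : ℕ, 1 / ((k : ℝ) + 1) ^ (p / (p - 1))) ^ ((p - 1) / p) ≤ C * p := by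
  refine ⟨1, one_pos, fun p hp => ?_⟩
  have hp0 : 0 < p := by linarith
  have hp1 : 0 < p - 1 := by linarith
  set q : ℝ := p / (p - 1) with hq_def
  have hq : 1 < q := (one_lt_div hp1).mpr (by linarith)
  have hq0 : 0 < q := by linarith
  have hsum : Summable (fun k : ℕ => 1 / ((k : ℝ) + 1) ^ q) := by
    have := (Real.summable_one_div_nat_add_rpow 1 q).mpr hq
    refine this.congr fun n => ?_
    rw [abs_of_nonneg (by positivity)]
  refine ⟨hsum, ?_⟩
  set Z : ℝ := ∑' k : ℕ, 1 / ((k : ℝ) + 1) ^ q with hZ_def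
  have hZ0 : 0 ≤ Z := tsum_nonneg fun k => by positivity
  -- ζ(q) ≤ q/(q-1) = p
  have hterm : 0 ≤ ZetaAsymptotics.termTSum q :=
    tsum_nonneg fun n => ZetaAsymptotics.term_nonneg _ _
  have hkey := ZetaAsymptotics.term_tsum_of_lt hq
  have hZle : Z ≤ p := by
    rw [hkey] at hterm
    have h1 : (1 / q) * Z ≤ 1 / (q - 1) := by linarith
    have hq1 : 0 < q - 1 := by linarith
    have : Z ≤ q / (q - 1) := by
      rw [div_eq_mul_one_div q]
      calc Z = q * ((1 / q) * Z) := by field_simp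
        _ ≤ q * (1 / (q - 1)) := by
            exact mul_le_mul_of_nonneg_left h1 hq0.le
    refine this.trans (le_of_eq ?_)
    rw [hq_def, div_sub_one hp1.ne']
    rw [div_div_div_cancel_right₀]
    · simp [hp1.ne']
    · exact hp1.ne'
  have he : 0 ≤ (p - 1) / p := by positivity
  have he1 : (p - 1) / p ≤ 1 := by
    rw [div_le_one hp0]; linarith
  calc Z ^ ((p - 1) / p) ≤ p ^ ((p - 1) / p) := rpow_le_rpow hZ0 hZle he
    _ ≤ p ^ (1 : ℝ) := rpow_le_rpow_of_exponent_le hp.le he1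
    _ = 1 * p := by rw [rpow_one, one_mul]
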